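/- Let X be a finite set with |X| ≥ 2 and let φ be an automorphism of the rooted tree X* of finite words over X. For k ≥ 0 define P_k = { w ∈ X^k : φ(w) = w and φ|_w ≠ id }. Suppose there exists p > 0 such that for every finite word w with φ|_w ≠ id there is u ∈ X^p with φ|_w(u) ≠ u. Then for every k ≥ 0, |P_{pk}| ≤ (|X|^p − 1)^k. -/

import Mathlib

/-- An automorphism of the rooted tree `X*` of finite words over `X`: a bijection of
`List X` preserving lengths and prefixes. -/
structure TreeAut (X : Type*) where
  toFun : List X → List X
  invFun : List X → List X
  left_inv : Function.LeftInverse invFun toFun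
  right_inv : Function.RightInverse invFun toFun
  length_eq : ∀ w : List X, (toFun w).length = w.length
  take_append : ∀ w v : List X, (toFun (w ++ v)).take w.length = toFun w

/-- The restriction (section) `φ|_w` of a tree automorphism `φ` at the word `w`,
characterised by `φ(w v) = φ(w) φ|_w(v)`. -/
def TreeAut.restrict {X : Type*} (φ : TreeAut X) (w : List X) : List X → List X :=
  fun v => (φ.toFun (w ++ v)).drop w.length

/-- The set `P_k` of words of length `k` fixed by `φ` whose restriction is nontrivial. -/
def TreeAut.badWords {X : Type*} (φ : TreeAut X) (k : ℕ) : Set (List X) :=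
  {w : List X | w.length = k ∧ φ.toFun w = w ∧ φ.restrict w ≠ id}

section Aux

variable {X : Type*} (φ : TreeAut X)

theorem TreeAut.length_restrict (w v : List X) :
    (φ.restrict w v).length = v.length := by
  simp [TreeAut.restrict, φ.length_eq]

theorem TreeAut.toFun_append (w v : List X) :
    φ.toFun (w ++ v) = φ.toFun w ++ φ.restrict w v := by
  conv_lhs => rw [← List.take_append_drop w.length (φ.toFun (w ++ v))]
  rw [φ.take_append]; rfl

theorem TreeAut.restrict_append (w u v : List X) :
    φ.restrict (w ++ u) v = (φ.restrict w (u ++ v)).drop u.length := by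
  simp only [TreeAut.restrict, List.append_assoc, List.drop_drop, List.length_append]

theorem TreeAut.restrict_append_eq_id (w u : List X) (h : φ.restrict w = id) :
    φ.restrict (w ++ u) = id := by
  funext v
  rw [φ.restrict_append, h]
  simp

/-- The key structural fact: a bad word of length `n + p` splits into a bad prefix of
length `n` and a fixed tail of length `p`. -/
theorem TreeAut.badWords_split (n q : ℕ) (w : List X) (hw : w ∈ φ.badWords (n + q)) :
    w.take n ∈ φ.badWords n ∧ φ.restrict (w.take n) (w.drop n) = w.drop n := by
  obtain ⟨hl, hfix, hres⟩ := hw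
  have hn : n ≤ w.length := by omega
  have hsplit : w.take n ++ w.drop n = w := List.take_append_drop n w
  have hlen' : (w.take n).length = n := by
    rw [List.length_take]; omega
  have happ : φ.toFun (w.take n) ++ φ.restrict (w.take n) (w.drop n) = w.take n ++ w.drop n := by
    rw [← φ.toFun_append, hsplit, hfix]
  have hkey := List.append_inj happ (by rw [φ.length_eq])
  have hfix' : φ.toFun (w.take n) = w.take n := hkey.1
  have htail : φ.restrict (w.take n) (w.drop n) = w.drop n := hkey.2
  refine ⟨⟨hlen', hfix', ?_⟩, htail⟩
  intro hid
  have := φ.restrict_append_eq_id (w.take n) (w.drop n) hid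
  rw [hsplit] at this
  exact hres this

end Aux

/-- Let `X` be finite with `|X| ≥ 2` and `φ` an automorphism of the
rooted tree `X*`.  Suppose `p > 0` is such that for every word `w` with `φ|_w ≠ id`
there is a word `u` of length `p` with `φ|_w(u) ≠ u`.  Then `|P_{pk}| ≤ (|X|^p − 1)^k`
for every `k ≥ 0`. -/
theorem card_badWords_le {X : Type*} [Fintype X] (hX : 2 ≤ Fintype.card X)
    (φ : TreeAut X) (p : ℕ) (hp : 0 < p)
    (hstate : ∀ w : List X, φ.restrict w ≠ id →
      ∃ u : List X, u.length = p ∧ φ.restrict w u ≠ u) :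
    ∀ k : ℕ, (φ.badWords (p * k)).ncard ≤ (Fintype.card X ^ p - 1) ^ k := by
  classical
  have hfin : ∀ m : ℕ, (φ.badWords m).Finite := fun m =>
    (List.finite_length_eq X m).subset (fun w hw => hw.1)
  -- the finset of all words of length p
  set L : Finset (List X) := (List.finite_length_eq X p).toFinset with hL
  have hmemL : ∀ l : List X, l ∈ L ↔ l.length = p := by
    intro l; simp [hL, Set.Finite.mem_toFinset]
  have hLcard : L.card = Fintype.card X ^ p := by
    rw [← card_vector (α := X) p, ← Fintype.card_coe L]
    apply Fintype.card_congr
    exact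
      { toFun := fun l => ⟨l.1, (hmemL l.1).mp l.2⟩
        invFun := fun v => ⟨v.toList, (hmemL _).mpr v.2⟩
        left_inv := fun l => rfl
        right_inv := fun v => rfl }
  intro k
  induction k with
  | zero =>
      simp only [Nat.mul_zero, pow_zero]
      calc (φ.badWords 0).ncard ≤ ({([] : List X)} : Set (List X)).ncard := by
            apply Set.ncard_le_ncard ?_ (Set.finite_singleton _)
            intro w hw
            simp [List.length_eq_zero_iff.mp hw.1]
        _ = 1 := Set.ncard_singleton _
  | succ k ih =>
      have hmul : p * (k + 1) = p * k + p := by ring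
      rw [hmul]
      set n := p * k with hn
      -- main step: going one level of p deeper multiplies the count by at most c^p - 1
      have hstep : (φ.badWords (n + p)).ncard ≤
          (Fintype.card X ^ p - 1) * (φ.badWords n).ncard := by
        rw [Set.ncard_eq_toFinset_card _ (hfin (n + p)),
            Set.ncard_eq_toFinset_card _ (hfin n)]
        set s := (hfin (n + p)).toFinset with hs
        set t := (hfin n).toFinset with ht
        have hfibers : ∀ a ∈ s.image (fun w => w.take n),
            (s.filter fun w => w.take n = a).card ≤ Fintype.card X ^ p - 1 := by
          intro a ha
          obtain ⟨w0, hw0, rfl⟩ := Finset.mem_image.mp ha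
          have hw0b := (hfin (n + p)).mem_toFinset.mp hw0
          have hw0' := φ.badWords_split n p w0 hw0b
          obtain ⟨u0, hu0, hne0⟩ := hstate _ hw0'.1.2.2
          have hcard : (s.filter fun w => w.take n = w0.take n).card ≤ (L.erase u0).card := by
            apply Finset.card_le_card_of_injOn (fun w => w.drop n)
            · intro w hw
              rw [Finset.mem_coe, Finset.mem_filter] at hw
              obtain ⟨hws, hwt⟩ := hw
              have hwb := (hfin (n + p)).mem_toFinset.mp hws
              have hsp := φ.badWords_split n p w hwb
              refine Finset.mem_erase.mpr ⟨?_, (hmemL _).mpr ?_⟩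
              · intro hEq
                apply hne0
                rw [← hwt, ← hEq]
                exact hsp.2
              · have hwl : w.length = n + p := hwb.1
                rw [List.length_drop]
                omega
            · intro w1 h1 w2 h2 hdrop
              simp only [Finset.coe_filter, Set.mem_setOf_eq] at h1 h2
              calc w1 = w1.take n ++ w1.drop n := (List.take_append_drop n w1).symm
                _ = w2.take n ++ w2.drop n := by rw [h1.2, h2.2, show w1.drop n = w2.drop n from hdrop]
                _ = w2 := List.take_append_drop n w2
          rwa [Finset.card_erase_of_mem ((hmemL u0).mpr hu0), hLcard] at hcard
        have himg : s.image (fun w => w.take n) ⊆ t := by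
          intro a ha
          obtain ⟨w0, hw0, rfl⟩ := Finset.mem_image.mp ha
          have hw0b := (hfin (n + p)).mem_toFinset.mp hw0
          exact (hfin n).mem_toFinset.mpr (φ.badWords_split n p w0 hw0b).1
        calc s.card ≤ (Fintype.card X ^ p - 1) * (s.image (fun w => w.take n)).card :=
              Finset.card_le_mul_card_image s _ hfibers
          _ ≤ (Fintype.card X ^ p - 1) * t.card :=
              Nat.mul_le_mul_left _ (Finset.card_le_card himg)
      calc (φ.badWords (n + p)).ncard
          ≤ (Fintype.card X ^ p - 1) * (φ.badWords n).ncard := hstep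
        _ ≤ (Fintype.card X ^ p - 1) * (Fintype.card X ^ p - 1) ^ k :=
            Nat.mul_le_mul_left _ ih
        _ = (Fintype.card X ^ p - 1) ^ (k + 1) := by rw [pow_succ]; ring
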